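/- Let O = ℤ[(1+√5)/2] be the ring of integers of ℚ(√5), ε = (1+√5)/2. For every integer z, set γ = ε^(4z) and β = (γ + γ^(−1) + γ^(−3))/3. Then β ∈ O and the triple (β, βγ, βγ²) satisfies x² + y² + z² = 3xyz. -/

import Mathlib

theorem stmt_18 (K : Type*) [Field K] [NumberField K]
    (θ : K) (hθ : θ ^ 2 = 5) (hdeg : Module.finrank ℚ K = 2)
    (ε : K) (hε : ε = (1 + θ) / 2) (z : ℤ)
    (γ β : K) (hγ : γ = ε ^ (4 * z)) (hβ : β = (γ + γ⁻¹ + γ ^ (-3 : ℤ)) / 3) :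
    IsIntegral ℤ β ∧
      β ^ 2 + (β * γ) ^ 2 + (β * γ ^ 2) ^ 2 = 3 * β * (β * γ) * (β * γ ^ 2) := by
  have h2 : (2 : K) ≠ 0 := two_ne_zero
  have h3 : (3 : K) ≠ 0 := three_ne_zero
  have hε2 : ε ^ 2 = ε + 1 := by
    rw [hε]; field_simp; linear_combination hθ
  have hεne : ε ≠ 0 := by
    intro h
    rw [h] at hε2
    norm_num at hε2
  have hγne : γ ≠ 0 := by rw [hγ]; exact zpow_ne_zero _ hεne
  have hε4 : ε ^ (4 : ℤ) = 3 * ε + 2 := by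
    rw [show (4:ℤ) = (4:ℕ) from rfl, zpow_natCast]
    linear_combination (ε^2 + ε + 2) * hε2
  have hε4' : ε ^ (-4 : ℤ) = 5 - 3 * ε := by
    have h : ε ^ (4:ℤ) * (5 - 3*ε) = 1 := by
      rw [hε4]; linear_combination (-9 : K) * hε2
    rw [show (-4:ℤ) = -(4:ℤ) from rfl, zpow_neg]
    exact inv_eq_of_mul_eq_one_right h
  have key : ∃ a b : ℤ, ε ^ (4*z) = (a : K) + b * ε ∧
      ε ^ (-(4*z)) = ((a : K) + b) - b * ε ∧ ¬ (3 ∣ a) ∧ 3 ∣ b := by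
    clear hβ hγ hγne
    induction z using Int.induction_on with
    | zero => exact ⟨1, 0, by norm_num, by norm_num, by decide, ⟨0, rfl⟩⟩
    | succ n ih =>
      obtain ⟨a, b, h1, h1', hA, hB⟩ := ih
      refine ⟨2*a+3*b, 3*a+5*b, ?_, ?_, by omega, by omega⟩
      · rw [show (4*((n:ℤ)+1)) = 4*n + 4 by ring, zpow_add₀ hεne, h1, hε4]
        push_cast
        linear_combination (3*(b:K)) * hε2
      · rw [show (-(4*((n:ℤ)+1))) = -(4*n) + (-4) by ring, zpow_add₀ hεne, h1', hε4']
        push_cast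
        linear_combination (3*(b:K)) * hε2
    | pred n ih =>
      obtain ⟨a, b, h1, h1', hA, hB⟩ := ih
      refine ⟨5*a-3*b, -3*a+2*b, ?_, ?_, by omega, by omega⟩
      · rw [show (4*(-(n:ℤ)-1)) = 4*(-n) + (-4) by ring, zpow_add₀ hεne, h1, hε4']
        push_cast
        linear_combination (-3*(b:K)) * hε2
      · rw [show (-(4*(-(n:ℤ)-1))) = -(4*(-n)) + 4 by ring, zpow_add₀ hεne, h1', hε4]
        push_cast
        linear_combination (-3*(b:K)) * hε2
  obtain ⟨a, b, h1, h1', hA, hB⟩ := key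
  obtain ⟨t, ht⟩ : ∃ t : ℤ, t = 2*a + b := ⟨_, rfl⟩
  have htK : ((t : ℤ) : K) = γ + γ⁻¹ := by
    rw [hγ, ← zpow_neg, h1, h1', ht]
    push_cast
    ring
  have h3t : t % 3 = 1 ∨ t % 3 = 2 := by omega
  have hdvd : (3 : ℤ) ∣ t^2 - 1 := by
    rcases h3t with h | h
    · obtain ⟨q, hq⟩ : ∃ q, t = 3*q + 1 := ⟨t/3, by omega⟩
      exact ⟨3*q^2 + 2*q, by rw [hq]; ring⟩
    · obtain ⟨q, hq⟩ : ∃ q, t = 3*q + 2 := ⟨t/3, by omega⟩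
      exact ⟨3*q^2 + 4*q + 1, by rw [hq]; ring⟩
  obtain ⟨m, hm⟩ := hdvd
  have h9 : ((t : ℤ) : K)^2 - 1 = 3 * ((m : ℤ) : K) := by exact_mod_cast congrArg (Int.cast : ℤ → K) hm
  have hmK : ((m : ℤ) : K) = ((γ + γ⁻¹)^2 - 1) / 3 := by
    rw [← htK, eq_div_iff h3]
    linear_combination -h9
  have hinv : γ * γ⁻¹ = 1 := mul_inv_cancel₀ hγne
  have hzp : γ ^ (-3 : ℤ) = (γ⁻¹) ^ 3 := by
    rw [show (-3:ℤ) = -(3:ℤ) from rfl, zpow_neg,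
      show (3:ℤ) = ((3:ℕ):ℤ) from rfl, zpow_natCast, ← inv_pow]
  have hN : 3 * β * γ ^ 3 = γ^4 + γ^2 + 1 := by
    rw [hβ, hzp]
    linear_combination (γ^2 + (γ*γ⁻¹)^2 + γ*γ⁻¹ + 1) * hinv
  constructor
  · refine ⟨Polynomial.X^2 + Polynomial.C (-(t*m)) * Polynomial.X + Polynomial.C (m^2), ?_, ?_⟩
    · monicity!
    · simp only [Polynomial.eval₂_add, Polynomial.eval₂_mul, Polynomial.eval₂_pow,
        Polynomial.eval₂_X, Polynomial.eval₂_C]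
      simp only [algebraMap_int_eq, eq_intCast]
      push_cast
      rw [hβ, hzp, htK, hmK]
      linear_combination (-(γ^2*γ⁻¹^2 + 3*γ*γ⁻¹^3 + γ*γ⁻¹ + 3*γ⁻¹^4 + 1)/9) * hinv
  · linear_combination (-β^2) * hN
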